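/- Let V be a finite type, r ∈ V, and par : V → V a function with par(r) = r such that for every v ∈ V there exists k ∈ ℕ with par^[k](v) = r (so (V, par, r) is a rooted tree given by parent pointers, and the children of a vertex v are the vertices w ≠ r with par(w) = v). Let c : V → ℝ satisfy c(v) ≥ 0 for all v ∈ V and, for every v ∈ V, Σ_{w ∈ V, w ≠ r, par(w) = v} c(w) ≤ c(v)/2. Then Σ_{v ∈ V} c(v) ≤ 2 · c(r). -/
import Mathlib


/-- Let `(V, par, r)` be a finite rooted tree given by parent
pointers (`par r = r` and every vertex reaches `r` under iteration of `par`;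
the children of `v` are the `w ≠ r` with `par w = v`).  If `c : V → ℝ` is
nonnegative and, for every `v`, the sum of `c` over the children of `v` is at
most `c v / 2`, then `Σ_v c v ≤ 2 · c r`. -/
theorem stmt13 {V : Type*} [Fintype V] [DecidableEq V] (r : V) (par : V → V)
    (hr : par r = r) (hreach : ∀ v : V, ∃ k : ℕ, par^[k] v = r)
    (c : V → ℝ) (hc0 : ∀ v, 0 ≤ c v)
    (hhalf : ∀ v : V,
      ∑ w ∈ Finset.univ.filter (fun w : V => w ≠ r ∧ par w = v), c w ≤ c v / 2) :
    ∑ v : V, c v ≤ 2 * c r := by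
  classical
  set d : V → ℕ := fun v => Nat.find (hreach v) with hd
  have hdspec : ∀ v, par^[d v] v = r := fun v => Nat.find_spec (hreach v)
  have hdmin : ∀ v k, k < d v → par^[k] v ≠ r := fun v k hk => Nat.find_min (hreach v) hk
  have hd0 : ∀ v, d v = 0 ↔ v = r := by
    intro v
    constructor
    · intro h; have := hdspec v; rwa [h, Function.iterate_zero_apply] at this
    · intro h; subst h
      exact Nat.eq_zero_of_le_zero (Nat.find_le (by simp))
  -- depth of parent
  have hdpar : ∀ v, v ≠ r → d (par v) + 1 = d v := by
    intro v hv
    have hpos : 0 < d v := Nat.pos_of_ne_zero (fun h => hv ((hd0 v).mp h))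
    have h1 : par^[d v - 1] (par v) = r := by
      rw [← Function.iterate_succ_apply, Nat.succ_eq_add_one,
        Nat.sub_add_cancel hpos]
      exact hdspec v
    have hle : d (par v) ≤ d v - 1 := Nat.find_le h1
    have hge : d v - 1 ≤ d (par v) := by
      by_contra h
      push_neg at h
      have : par^[d (par v) + 1] v ≠ r := hdmin v _ (by omega)
      rw [Function.iterate_succ_apply] at this
      exact this (hdspec (par v))
    omega
  -- depth bound: the points v, par v, ..., par^[d v] v are distinct
  have hdlt : ∀ v, d v < Fintype.card V := by
    intro v
    have key : ∀ i j : ℕ, i < j → j ≤ d v → par^[i] v ≠ par^[j] v := by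
      intro i j hij hj heq
      have h1 : par^[d v - j + i] v = r := by
        have h2 := congrArg (par^[d v - j]) heq
        simp only [← Function.iterate_add_apply] at h2
        rw [Nat.add_comm (d v - j) i] at h2
        rw [Nat.add_comm (d v - j) j, Nat.add_sub_cancel' hj] at h2
        rw [Nat.add_comm, h2]
        exact hdspec v
      exact hdmin v _ (by omega) h1
    have hinj : Function.Injective (fun i : Fin (d v + 1) => par^[(i : ℕ)] v) := by
      intro i j hij
      simp only at hij
      rcases lt_trichotomy (i : ℕ) (j : ℕ) with h | h | h
      · exact absurd hij (key _ _ h (Nat.lt_succ_iff.mp j.isLt))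
      · exact Fin.ext h
      · exact absurd hij.symm (key _ _ h (Nat.lt_succ_iff.mp i.isLt))
    have := Fintype.card_le_of_injective _ hinj
    simp at this; omega
  -- level sums
  set L : ℕ → ℝ := fun k => ∑ v ∈ Finset.univ.filter (fun v => d v = k), c v with hL
  have hL0 : L 0 = c r := by
    rw [hL]
    have : Finset.univ.filter (fun v => d v = 0) = {r} := by
      ext v; simp [hd0 v]
    simp [this]
  have hstep : ∀ k, L (k + 1) ≤ L k / 2 := by
    intro k
    have hset : Finset.univ.filter (fun v => d v = k + 1)
        = (Finset.univ.filter (fun v => d v = k)).biUnion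
          (fun v => Finset.univ.filter (fun w : V => w ≠ r ∧ par w = v)) := by
      ext w
      simp only [Finset.mem_biUnion, Finset.mem_filter, Finset.mem_univ, true_and]
      constructor
      · intro h
        have hwr : w ≠ r := fun he => by rw [(hd0 w).mpr he] at h; omega
        exact ⟨par w, by have := hdpar w hwr; omega, hwr, rfl⟩
      · rintro ⟨v, hv, hwr, rfl⟩
        have := hdpar w hwr; omega
    have hdisj : ∀ v ∈ Finset.univ.filter (fun v => d v = k),
        ∀ u ∈ Finset.univ.filter (fun v => d v = k), v ≠ u →
        Disjoint (Finset.univ.filter (fun w : V => w ≠ r ∧ par w = v))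
          (Finset.univ.filter (fun w : V => w ≠ r ∧ par w = u)) := by
      intro v _ u _ hvu
      rw [Finset.disjoint_left]
      intro w hw hw'
      simp only [Finset.mem_filter] at hw hw'
      exact hvu (hw.2.2 ▸ hw'.2.2)
    calc L (k + 1) = ∑ v ∈ Finset.univ.filter (fun v => d v = k),
            ∑ w ∈ Finset.univ.filter (fun w : V => w ≠ r ∧ par w = v), c w := by
            simp only [hL]; rw [hset, Finset.sum_biUnion hdisj]
      _ ≤ ∑ v ∈ Finset.univ.filter (fun v => d v = k), c v / 2 :=
            Finset.sum_le_sum (fun v _ => hhalf v)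
      _ = L k / 2 := by simp only [hL]; rw [Finset.sum_div]
  have hLbound : ∀ k, L k ≤ c r / 2 ^ k := by
    intro k
    induction k with
    | zero => simp [hL0]
    | succ n ih =>
        calc L (n + 1) ≤ L n / 2 := hstep n
          _ ≤ (c r / 2 ^ n) / 2 := by linarith
          _ = c r / 2 ^ (n + 1) := by ring
  set N := Fintype.card V with hN
  have htotal : ∑ v : V, c v = ∑ k ∈ Finset.range N, L k := by
    exact (Finset.sum_fiberwise_of_maps_to
      (fun v _ => Finset.mem_range.mpr (hdlt v)) c).symm
  rw [htotal]
  calc ∑ k ∈ Finset.range N, L k ≤ ∑ k ∈ Finset.range N, c r / 2 ^ k :=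
        Finset.sum_le_sum (fun k _ => hLbound k)
    _ = c r * ∑ k ∈ Finset.range N, (1 / 2 : ℝ) ^ k := by
        rw [Finset.mul_sum]; exact Finset.sum_congr rfl (fun k _ => by
          rw [div_pow, one_pow]; ring)
    _ ≤ c r * 2 := by
        have h2 : ∑ k ∈ Finset.range N, (1 / 2 : ℝ) ^ k ≤ 2 := by
          rw [geom_sum_eq (by norm_num : (1 / 2 : ℝ) ≠ 1) N]
          have h0 : (0:ℝ) ≤ (1/2:ℝ)^N := by positivity
          have he : ((1/2:ℝ)^N - 1) / (1/2 - 1) = 2 - 2 * (1/2:ℝ)^N := by ring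
          rw [he]; linarith
        nlinarith [hc0 r]
    _ = 2 * c r := by ring
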